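/- For 4 ≤ k ≤ n, let E_k be the n-dimensional evolution algebra with e_1·e_1 = e_2 + e_3 + ⋯ + e_k, e_2·e_2 = -e_4, e_i·e_i = e_{i+1} for 3 ≤ i ≤ k-1, and e_i·e_i = 0 for i ≥ k. Then E_k^{3·2^i} = span{e_{4+i},...,e_k} for 0 ≤ i ≤ k-4, and the nilpotency index of E_k is exactly 1 + 3·2^{k-4}. -/

import Mathlib

/-- Evolution algebra multiplication on `Fin n → ℂ` determined by a structure
matrix `A`: basis vectors satisfy `eᵢ · eⱼ = 0` for `i ≠ j` and
`eᵢ · eᵢ = ∑ k, A i k • e k`. -/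
noncomputable def eMul {n : ℕ} (A : Matrix (Fin n) (Fin n) ℂ) (x y : Fin n → ℂ) : Fin n → ℂ :=
  fun k => ∑ p, x p * y p * A p k

/-- Product of two subspaces: the span of all products. -/
noncomputable def sMul {n : ℕ} (A : Matrix (Fin n) (Fin n) ℂ) (S T : Submodule ℂ (Fin n → ℂ)) :
    Submodule ℂ (Fin n → ℂ) :=
  Submodule.span ℂ {z | ∃ x ∈ S, ∃ y ∈ T, z = eMul A x y}

/-- `dPow A k = E⁽ᵏ⁾`: `E⁽¹⁾ = E`, `E⁽ᵏ⁺¹⁾ = E⁽ᵏ⁾E⁽ᵏ⁾` (index 0 is a dummy). -/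
noncomputable def dPow {n : ℕ} (A : Matrix (Fin n) (Fin n) ℂ) : ℕ → Submodule ℂ (Fin n → ℂ)
  | 0 => ⊤
  | 1 => ⊤
  | (k+2) => sMul A (dPow A (k+1)) (dPow A (k+1))

/-- `rPow A k = E^{<k>}`: `E^{<1>} = E`, `E^{<k+1>} = E^{<k>}·E` (index 0 dummy). -/
noncomputable def rPow {n : ℕ} (A : Matrix (Fin n) (Fin n) ℂ) : ℕ → Submodule ℂ (Fin n → ℂ)
  | 0 => ⊤
  | 1 => ⊤
  | (k+2) => sMul A (rPow A (k+1)) ⊤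

/-- `pPow A k = Eᵏ`: `E¹ = E`, `Eᵏ = ∑_{i=1}^{k-1} Eⁱ·E^{k-i}` (index 0 dummy). -/
noncomputable def pPow {n : ℕ} (A : Matrix (Fin n) (Fin n) ℂ) : ℕ → Submodule ℂ (Fin n → ℂ)
  | 0 => ⊤
  | 1 => ⊤
  | (k+2) => ⨆ i : Fin (k+1), sMul A (pPow A (i.1+1)) (pPow A (k+1-i.1))
termination_by k => k
decreasing_by all_goals (have := i.isLt; omega)


lemma pPow_two_eq {n : ℕ} (A : Matrix (Fin n) (Fin n) ℂ) : pPow A 2 = sMul A ⊤ ⊤ := by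
  have h : pPow A (0+2) = ⨆ i : Fin (0+1), sMul A (pPow A (i.1+1)) (pPow A (0+1-i.1)) := by
    conv_lhs => rw [pPow]
  simp only [Nat.zero_add] at h
  rw [h]
  apply le_antisymm
  · exact iSup_le fun i => by rw [Fin.fin_one_eq_zero i]; exact le_rfl.trans (by norm_num [pPow])
  · exact le_iSup_of_le ⟨0, Nat.zero_lt_one⟩ (by norm_num [pPow])

lemma eMul_comm {n : ℕ} (A : Matrix (Fin n) (Fin n) ℂ) (x y : Fin n → ℂ) :
    eMul A x y = eMul A y x := by
  funext r
  exact Finset.sum_congr rfl fun p _ => by ring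

lemma sMul_comm {n : ℕ} (A : Matrix (Fin n) (Fin n) ℂ) (S T : Submodule ℂ (Fin n → ℂ)) :
    sMul A S T = sMul A T S := by
  unfold sMul
  congr 1
  ext z
  constructor
  · rintro ⟨x, hx, y, hy, rfl⟩; exact ⟨y, hy, x, hx, eMul_comm A x y⟩
  · rintro ⟨x, hx, y, hy, rfl⟩; exact ⟨y, hy, x, hx, eMul_comm A x y⟩

lemma sMul_mono {n : ℕ} (A : Matrix (Fin n) (Fin n) ℂ) {S T S' T' : Submodule ℂ (Fin n → ℂ)}
    (hS : S ≤ S') (hT : T ≤ T') : sMul A S T ≤ sMul A S' T' :=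
  Submodule.span_mono fun z ⟨x, hx, y, hy, h⟩ => ⟨x, hS hx, y, hT hy, h⟩

lemma mem_sMul {n : ℕ} (A : Matrix (Fin n) (Fin n) ℂ) {S T : Submodule ℂ (Fin n → ℂ)}
    {x y : Fin n → ℂ} (hx : x ∈ S) (hy : y ∈ T) : eMul A x y ∈ sMul A S T :=
  Submodule.subset_span ⟨x, hx, y, hy, rfl⟩

/-- Submodule of vectors supported on indices in `[a, k-1]`. -/
noncomputable def Mset (n k a : ℕ) : Submodule ℂ (Fin n → ℂ) where
  carrier := {v | ∀ r : Fin n, ((r : ℕ) < a ∨ k - 1 < (r : ℕ)) → v r = 0}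
  add_mem' := fun hx hy r hr => by simp only [Pi.add_apply, hx r hr, hy r hr, add_zero]
  zero_mem' := fun r _ => rfl
  smul_mem' := fun c x hx r hr => by simp only [Pi.smul_apply, hx r hr, smul_zero]

lemma mem_Mset {n k a : ℕ} {v : Fin n → ℂ} :
    v ∈ Mset n k a ↔ ∀ r : Fin n, ((r : ℕ) < a ∨ k - 1 < (r : ℕ)) → v r = 0 := Iff.rfl

lemma Mset_antitone {n k : ℕ} {a b : ℕ} (h : a ≤ b) : Mset n k b ≤ Mset n k a :=
  fun v hv r hr => hv r (by omega)

/-- Span of basis vectors with index in `[a, k-1]`. -/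
noncomputable def Sp (n k a : ℕ) : Submodule ℂ (Fin n → ℂ) :=
  Submodule.span ℂ {v | ∃ j : Fin n, a ≤ (j : ℕ) ∧ (j : ℕ) ≤ k - 1 ∧ v = Pi.single j (1 : ℂ)}

lemma Sp_le_Mset {n k a : ℕ} : Sp n k a ≤ Mset n k a := by
  rw [Sp, Submodule.span_le]
  rintro v ⟨j, hj1, hj2, rfl⟩ r hr
  exact Pi.single_eq_of_ne (fun h : r = j => by subst h; omega) 1

lemma Mset_le_Sp {n k a : ℕ} : Mset n k a ≤ Sp n k a := by
  intro v hv
  have hv' : v = ∑ r : Fin n, Pi.single r (v r) := (Finset.univ_sum_single v).symm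
  rw [hv']
  apply Submodule.sum_mem
  intro r _
  by_cases h : v r = 0
  · rw [h, Pi.single_zero]; exact Submodule.zero_mem _
  · have hr : a ≤ (r : ℕ) ∧ (r : ℕ) ≤ k - 1 := by
      by_contra hc
      exact h (hv r (by omega))
    have : Pi.single r (v r) = (v r) • (Pi.single r (1 : ℂ) : Fin n → ℂ) := by
      funext j
      simp [Pi.single_apply, mul_ite]
    rw [this]
    exact Submodule.smul_mem _ _ (Submodule.subset_span ⟨r, hr.1, hr.2, rfl⟩)

lemma Sp_antitone {n k : ℕ} {a b : ℕ} (h : a ≤ b) : Sp n k b ≤ Sp n k a :=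
  (Sp_le_Mset.trans (Mset_antitone h)).trans Mset_le_Sp

/-- The subspace containing `E²`. -/
noncomputable def Vsub (n k : ℕ) : Submodule ℂ (Fin n → ℂ) where
  carrier := {v | (∀ r : Fin n, (r : ℕ) = 0 → v r = 0) ∧
    (∀ r s : Fin n, (r : ℕ) = 1 → (s : ℕ) = 2 → v r = v s) ∧
    (∀ r : Fin n, k - 1 < (r : ℕ) → v r = 0)}
  add_mem' := fun hx hy => ⟨fun r hr => by simp [hx.1 r hr, hy.1 r hr],
    fun r s hr hs => by simp [hx.2.1 r s hr hs, hy.2.1 r s hr hs],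
    fun r hr => by simp [hx.2.2 r hr, hy.2.2 r hr]⟩
  zero_mem' := ⟨fun _ _ => rfl, fun _ _ _ _ => rfl, fun _ _ => rfl⟩
  smul_mem' := fun c x hx => ⟨fun r hr => by simp [hx.1 r hr],
    fun r s hr hs => by simp [hx.2.1 r s hr hs],
    fun r hr => by simp [hx.2.2 r hr]⟩

section WithA
variable {n k : ℕ} {A : Matrix (Fin n) (Fin n) ℂ}

def hAprop (n k : ℕ) (A : Matrix (Fin n) (Fin n) ℂ) : Prop := ∀ i j : Fin n, A i j =
      if (i : ℕ) = 0 then (if 1 ≤ (j : ℕ) ∧ (j : ℕ) ≤ k - 1 then 1 else 0)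
      else if (i : ℕ) = 1 then (if (j : ℕ) = 3 then -1 else 0)
      else if 2 ≤ (i : ℕ) ∧ (i : ℕ) ≤ k - 2 ∧ (j : ℕ) = (i : ℕ) + 1 then 1 else 0

lemma sMul_Mset_le (hA : hAprop n k A) {a : ℕ} (ha : 2 ≤ a)
    {X Y : Submodule ℂ (Fin n → ℂ)} (hX : X ≤ Mset n k a) :
    sMul A X Y ≤ Mset n k (a+1) := by
  rw [sMul, Submodule.span_le]
  rintro z ⟨x, hx, y, hy, rfl⟩ r hr
  show (∑ p, x p * y p * A p r) = 0
  apply Finset.sum_eq_zero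
  intro p _
  by_cases hxp : x p = 0
  · rw [hxp, zero_mul, zero_mul]
  · have hp : a ≤ (p : ℕ) ∧ (p : ℕ) ≤ k - 1 := by
      by_contra hc
      exact hxp (hX hx p (by omega))
    have hz : A p r = 0 := by
      rw [hA]
      split_ifs <;> first | rfl | (exfalso; omega)
    rw [hz, mul_zero]

lemma sMul_top_top_le (hk4 : 4 ≤ k) (hA : hAprop n k A) :
    sMul A (⊤ : Submodule ℂ (Fin n → ℂ)) ⊤ ≤ Vsub n k := by
  rw [sMul, Submodule.span_le]
  rintro z ⟨x, -, y, -, rfl⟩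
  refine ⟨?_, ?_, ?_⟩
  · intro r hr
    apply Finset.sum_eq_zero
    intro p _
    have hz : A p r = 0 := by rw [hA]; split_ifs <;> first | rfl | (exfalso; omega)
    rw [hz, mul_zero]
  · intro r s hr hs
    apply Finset.sum_congr rfl
    intro p _
    have hz : A p r = A p s := by rw [hA, hA]; split_ifs <;> first | rfl | (exfalso; omega)
    rw [hz]
  · intro r hr
    apply Finset.sum_eq_zero
    intro p _
    have hz : A p r = 0 := by rw [hA]; split_ifs <;> first | rfl | (exfalso; omega)
    rw [hz, mul_zero]

lemma sMul_Vsub_top_le (hk4 : 4 ≤ k) (hA : hAprop n k A) :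
    sMul A (Vsub n k) ⊤ ≤ Mset n k 3 := by
  rw [sMul, Submodule.span_le]
  rintro z ⟨x, hx, y, -, rfl⟩ r hr
  apply Finset.sum_eq_zero
  intro p _
  by_cases hxp : x p = 0
  · rw [hxp, zero_mul, zero_mul]
  · have hp0 : (p : ℕ) ≠ 0 := fun h => hxp (hx.1 p h)
    have hpk : (p : ℕ) ≤ k - 1 := by
      by_contra hc
      exact hxp (hx.2.2 p (by omega))
    have hz : A p r = 0 := by rw [hA]; split_ifs <;> first | rfl | (exfalso; omega)
    rw [hz, mul_zero]

lemma sMul_Vsub_Vsub_le (hk4 : 4 ≤ k) (hkn : k ≤ n) (hA : hAprop n k A) :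
    sMul A (Vsub n k) (Vsub n k) ≤ Mset n k 4 := by
  rw [sMul, Submodule.span_le]
  rintro z ⟨x, hx, y, hy, rfl⟩ r hr
  show (∑ p, x p * y p * A p r) = 0
  by_cases hr3 : (r : ℕ) = 3
  · have h1n : 1 < n := by omega
    have h2n : 2 < n := by omega
    set i1 : Fin n := ⟨1, h1n⟩ with hi1
    set i2 : Fin n := ⟨2, h2n⟩ with hi2
    have hsub : ({i1, i2} : Finset (Fin n)) ⊆ Finset.univ := Finset.subset_univ _
    have hzero : ∀ p ∈ Finset.univ, p ∉ ({i1, i2} : Finset (Fin n)) →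
        x p * y p * A p r = 0 := by
      intro p _ hp
      simp only [Finset.mem_insert, Finset.mem_singleton] at hp
      push_neg at hp
      have hp1 : (p : ℕ) ≠ 1 := fun h => hp.1 (Fin.ext (by simp [hi1, h]))
      have hp2 : (p : ℕ) ≠ 2 := fun h => hp.2 (Fin.ext (by simp [hi2, h]))
      by_cases hp0 : (p : ℕ) = 0
      · rw [hx.1 p hp0, zero_mul, zero_mul]
      · have hz : A p r = 0 := by rw [hA]; split_ifs <;> first | rfl | (exfalso; omega)
        rw [hz, mul_zero]
    rw [← Finset.sum_subset hsub hzero]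
    have hne : i1 ≠ i2 := by simp [hi1, hi2, Fin.ext_iff]
    rw [Finset.sum_pair hne]
    have hA1 : A i1 r = -1 := by rw [hA]; simp only [hi1]; norm_num [hr3]
    have hA2 : A i2 r = 1 := by
      rw [hA]; simp only [hi2]
      have : ¬ ((2:ℕ) = 0) := by omega
      rw [if_neg (by norm_num), if_neg (by norm_num), if_pos (by omega)]
    have ex : x i1 = x i2 := hx.2.1 i1 i2 rfl rfl
    have ey : y i1 = y i2 := hy.2.1 i1 i2 rfl rfl
    rw [hA1, hA2, ex, ey]
    ring
  · apply Finset.sum_eq_zero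
    intro p _
    by_cases hxp : x p = 0
    · rw [hxp, zero_mul, zero_mul]
    · have hp0 : (p : ℕ) ≠ 0 := fun h => hxp (hx.1 p h)
      have hpk : (p : ℕ) ≤ k - 1 := by
        by_contra hc
        exact hxp (hx.2.2 p (by omega))
      have hz : A p r = 0 := by rw [hA]; split_ifs <;> first | rfl | (exfalso; omega)
      rw [hz, mul_zero]


noncomputable def wvec (n k : ℕ) : Fin n → ℂ :=
  fun r => if 1 ≤ (r : ℕ) ∧ (r : ℕ) ≤ k - 1 then 1 else 0

lemma eMul_single_self (A : Matrix (Fin n) (Fin n) ℂ) (j : Fin n) :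
    eMul A (Pi.single j 1) (Pi.single j 1) = fun r => A j r := by
  funext r
  simp only [eMul]
  rw [Finset.sum_eq_single j]
  · rw [Pi.single_eq_same]; ring
  · intro p _ hp
    rw [Pi.single_eq_of_ne hp]; ring
  · intro h; exact absurd (Finset.mem_univ j) h

lemma rowA_mid (hA : hAprop n k A) {j : Fin n} (h2 : 2 ≤ (j : ℕ)) (hk2 : (j : ℕ) ≤ k - 2)
    (h1n : (j : ℕ) + 1 < n) :
    (fun r => A j r) = Pi.single (⟨(j : ℕ) + 1, h1n⟩ : Fin n) (1 : ℂ) := by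
  funext r
  rw [hA, Pi.single_apply]
  simp only [Fin.ext_iff]
  split_ifs <;> first | rfl | (exfalso; omega)

lemma rowA_one (hA : hAprop n k A) {j : Fin n} (hj : (j : ℕ) = 1) (h3n : 3 < n) :
    (fun r => A j r) = -Pi.single (⟨3, h3n⟩ : Fin n) (1 : ℂ) := by
  funext r
  rw [hA, Pi.neg_apply, Pi.single_apply]
  simp only [Fin.ext_iff]
  split_ifs <;> first | rfl | (exfalso; omega) | norm_num

lemma rowA_zero (hA : hAprop n k A) {j : Fin n} (hj : (j : ℕ) = 0) :
    (fun r => A j r) = wvec n k := by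
  funext r
  rw [hA, if_pos hj]
  rfl

lemma eMul_single_one_wvec (hk4 : 4 ≤ k) (hA : hAprop n k A) {j : Fin n} (hj : (j : ℕ) = 1) :
    eMul A (Pi.single j 1) (wvec n k) = fun r => A j r := by
  funext r
  simp only [eMul]
  rw [Finset.sum_eq_single j]
  · rw [Pi.single_eq_same]
    have : wvec n k j = 1 := by rw [wvec, if_pos (by omega)]
    rw [this]; ring
  · intro p _ hp
    rw [Pi.single_eq_of_ne hp]; ring
  · intro h; exact absurd (Finset.mem_univ j) h

lemma wvec_mem_pPow_two (hk4 : 4 ≤ k) (hkn : k ≤ n) (hA : hAprop n k A) :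
    wvec n k ∈ pPow A 2 := by
  rw [pPow_two_eq]
  have h0n : (0 : ℕ) < n := by omega
  have h := mem_sMul A (S := ⊤) (T := ⊤)
    (x := Pi.single (⟨0, h0n⟩ : Fin n) (1:ℂ)) (y := Pi.single (⟨0, h0n⟩ : Fin n) (1:ℂ))
    trivial trivial
  rwa [eMul_single_self, rowA_zero hA rfl] at h

lemma single_mem_pPow_two (hk4 : 4 ≤ k) (hkn : k ≤ n) (hA : hAprop n k A) {j : Fin n}
    (h3 : 3 ≤ (j : ℕ)) (hjk : (j : ℕ) ≤ k - 1) :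
    Pi.single j (1 : ℂ) ∈ pPow A 2 := by
  rw [pPow_two_eq]
  rcases eq_or_lt_of_le h3 with h3' | h4
  · have h1n : (1 : ℕ) < n := by omega
    have h3n : (3 : ℕ) < n := by omega
    have h := mem_sMul A (S := ⊤) (T := ⊤)
      (x := Pi.single (⟨1, h1n⟩ : Fin n) (1:ℂ)) (y := Pi.single (⟨1, h1n⟩ : Fin n) (1:ℂ))
      trivial trivial
    rw [eMul_single_self, rowA_one hA rfl h3n] at h
    have hjeq : j = (⟨3, h3n⟩ : Fin n) := by
      apply Fin.ext
      show (j : ℕ) = 3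
      omega
    have : (Pi.single j (1 : ℂ) : Fin n → ℂ) = -(-(Pi.single (⟨3, h3n⟩ : Fin n) (1 : ℂ) : Fin n → ℂ)) := by
      rw [neg_neg, hjeq]
    rw [this]
    exact Submodule.neg_mem _ h
  · have hpn : (j : ℕ) - 1 < n := by omega
    set p : Fin n := ⟨(j : ℕ) - 1, hpn⟩ with hp
    have h1n : ((p : ℕ)) + 1 < n := by show (j:ℕ) - 1 + 1 < n; omega
    have h := mem_sMul A (S := ⊤) (T := ⊤)
      (x := Pi.single p (1:ℂ)) (y := Pi.single p (1:ℂ)) trivial trivial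
    rw [eMul_single_self, rowA_mid hA (show 2 ≤ (j:ℕ)-1 by omega) (show (j:ℕ)-1 ≤ k-2 by omega) h1n] at h
    have hjeq : (⟨(p : ℕ) + 1, h1n⟩ : Fin n) = j := by
      apply Fin.ext
      show (j:ℕ) - 1 + 1 = (j:ℕ)
      omega
    rwa [hjeq] at h

end WithA

lemma exists_le_pow (m : ℕ) : ∃ i : ℕ, m ≤ 3 * 2 ^ i :=
  ⟨m, le_trans (Nat.lt_two_pow_self (n := m)).le (Nat.le_mul_of_pos_left _ (by norm_num))⟩

noncomputable def gg (m : ℕ) : ℕ := Nat.find (exists_le_pow m)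

lemma gg_le_iff {m j : ℕ} : gg m ≤ j ↔ m ≤ 3 * 2 ^ j := by
  constructor
  · intro h
    exact le_trans (Nat.find_spec (exists_le_pow m))
      (Nat.mul_le_mul_left 3 (Nat.pow_le_pow_right (by norm_num) h))
  · intro h
    exact Nat.find_min' (exists_le_pow m) h

lemma gg_spec (m : ℕ) : m ≤ 3 * 2 ^ (gg m) := Nat.find_spec (exists_le_pow m)

lemma gg_three : gg 3 = 0 := Nat.le_zero.mp (gg_le_iff.mpr (by norm_num))

lemma gg_pow (i : ℕ) : gg (3 * 2 ^ i) = i := by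
  have h1 : gg (3 * 2 ^ i) ≤ i := gg_le_iff.mpr le_rfl
  rcases Nat.eq_zero_or_pos i with rfl | hi
  · omega
  · by_contra hc
    have h2 : gg (3 * 2 ^ i) ≤ i - 1 := by omega
    have := gg_le_iff.mp h2
    have h3 : (2:ℕ) ^ (i-1) < 2 ^ i := Nat.pow_lt_pow_right (by norm_num) (by omega)
    omega

set_option maxHeartbeats 1000000 in
lemma pPow_unfold {n : ℕ} (A : Matrix (Fin n) (Fin n) ℂ) (m : ℕ) :
    pPow A (m+2) = ⨆ t : Fin (m+1), sMul A (pPow A (t.1+1)) (pPow A (m+1-t.1)) := by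
  conv_lhs => rw [pPow]

lemma pPow_one_eq {n : ℕ} (A : Matrix (Fin n) (Fin n) ℂ) : pPow A 1 = ⊤ := by rw [pPow]

lemma sMul_le_pPow {n : ℕ} (A : Matrix (Fin n) (Fin n) ℂ) {mm a : ℕ} (h1 : 1 ≤ a)
    (h2 : a ≤ mm + 1) :
    sMul A (pPow A a) (pPow A (mm + 2 - a)) ≤ pPow A (mm + 2) := by
  rw [pPow_unfold]
  have h := le_iSup (fun t : Fin (mm+1) => sMul A (pPow A (t.1+1)) (pPow A (mm+1-t.1)))
    (⟨a-1, by omega⟩ : Fin (mm+1))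
  convert h using 3 <;> simp <;> omega

set_option maxHeartbeats 1000000 in
lemma pPow_eq_Sp {n k : ℕ} (hk4 : 4 ≤ k) (hkn : k ≤ n) {A : Matrix (Fin n) (Fin n) ℂ}
    (hA : hAprop n k A) : ∀ m : ℕ, 3 ≤ m → pPow A m = Sp n k (3 + gg m) := by
  intro m
  induction m using Nat.strong_induction_on with
  | _ m IH =>
  intro hm
  obtain ⟨mm, rfl⟩ : ∃ mm, m = mm + 2 := ⟨m - 2, by omega⟩
  have hmm1 : 1 ≤ mm := by omega
  set i := gg (mm + 2) with hi
  have hile : mm + 2 ≤ 3 * 2 ^ i := gg_spec _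
  apply le_antisymm
  · -- upper bound
    have claim : ∀ a b : ℕ, a + b = mm + 2 → 1 ≤ a → a ≤ b →
        sMul A (pPow A a) (pPow A b) ≤ Sp n k (3 + i) := by
      intro a b hab ha hab2
      by_cases hb3 : 3 ≤ b
      · have hblt : b < mm + 2 := by omega
        have hpb : pPow A b = Sp n k (3 + gg b) := IH b hblt hb3
        have hib : 3 + i ≤ 4 + gg b := by
          by_contra hc
          have h2 : 2 ≤ i := by omega
          have hgb : gg b ≤ i - 2 := by omega
          have hble : b ≤ 3 * 2 ^ (i - 2) := gg_le_iff.mp hgb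
          have hpow : (2:ℕ) ^ (i-1) = 2 * 2 ^ (i-2) := by
            rw [← pow_succ']
            congr 1
            omega
          have h4 : mm + 2 ≤ 3 * 2 ^ (i-1) := by omega
          have h5 : gg (mm + 2) ≤ i - 1 := gg_le_iff.mpr h4
          omega
        calc sMul A (pPow A a) (pPow A b) = sMul A (pPow A b) (pPow A a) := sMul_comm A _ _
          _ ≤ Mset n k (3 + gg b + 1) :=
              sMul_Mset_le hA (by omega) (le_trans (le_of_eq hpb) Sp_le_Mset)
          _ ≤ Mset n k (3 + i) := Mset_antitone (by omega)
          _ ≤ Sp n k (3 + i) := Mset_le_Sp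
      · -- b ≤ 2
        have hb2 : b ≤ 2 := by omega
        have hb1 : 1 ≤ b := by omega
        interval_cases b <;> interval_cases a
        · -- a = 1, b = 1 : impossible
          omega
        · -- a = 1, b = 2 : mm = 1, i = 0
          have hmm : mm = 1 := by omega
          have hi0 : i = 0 := by rw [hi, hmm]; exact gg_three
          have hP2 : pPow A 2 ≤ Vsub n k := le_of_eq_of_le (pPow_two_eq A) (sMul_top_top_le hk4 hA)
          calc sMul A (pPow A 1) (pPow A 2) = sMul A (pPow A 2) (pPow A 1) := sMul_comm A _ _
            _ ≤ sMul A (Vsub n k) ⊤ := sMul_mono A hP2 le_top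
            _ ≤ Mset n k 3 := sMul_Vsub_top_le hk4 hA
            _ ≤ Mset n k (3 + i) := Mset_antitone (by omega)
            _ ≤ Sp n k (3 + i) := Mset_le_Sp
        · -- a = 2, b = 2 : mm = 2, i = 1
          have hmm : mm = 2 := by omega
          have hi1 : i = 1 := by
            have h1 : i ≤ 1 := by
              rw [hi, hmm]
              exact gg_le_iff.mpr (by norm_num)
            have h2 : ¬ (i ≤ 0) := by
              intro h
              have := gg_le_iff.mp (hi ▸ h)
              rw [hmm] at this
              norm_num at this
            omega
          have hP2 : pPow A 2 ≤ Vsub n k := le_of_eq_of_le (pPow_two_eq A) (sMul_top_top_le hk4 hA)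
          calc sMul A (pPow A 2) (pPow A 2) ≤ sMul A (Vsub n k) (Vsub n k) := sMul_mono A hP2 hP2
            _ ≤ Mset n k 4 := sMul_Vsub_Vsub_le hk4 hkn hA
            _ ≤ Mset n k (3 + i) := Mset_antitone (by omega)
            _ ≤ Sp n k (3 + i) := Mset_le_Sp
    rw [pPow_unfold]
    refine iSup_le fun t => ?_
    have ht := t.isLt
    have hab : (t.1 + 1) + (mm + 1 - t.1) = mm + 2 := by omega
    rcases le_total (t.1 + 1) (mm + 1 - t.1) with h | h
    · exact claim _ _ hab (by omega) h
    · rw [sMul_comm]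
      exact claim _ _ (by omega) (by omega) h
  · -- lower bound
    rcases Nat.eq_zero_or_pos i with hi0 | hipos
    · -- i = 0, so mm = 1, m = 3
      have hmm : mm = 1 := by
        have h0 : gg (mm+2) ≤ 0 := by rw [← hi, hi0]
        have := gg_le_iff.mp h0
        omega
      subst hmm
      have hterm : sMul A (pPow A 1) (pPow A (1+2-1)) ≤ pPow A (1+2) :=
        sMul_le_pPow A (by omega) (by omega)
      have e1 : (1:ℕ)+2-1 = 2 := rfl
      rw [e1] at hterm
      refine le_trans ?_ hterm
      rw [Sp, Submodule.span_le]
      rintro v ⟨j, hj3, hjk, rfl⟩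
      have hj3' : 3 ≤ (j : ℕ) := by omega
      rcases eq_or_lt_of_le hj3' with h3' | h4
      · -- j = 3
        have h1n : (1:ℕ) < n := by omega
        have h3n : (3:ℕ) < n := by omega
        have hmem := mem_sMul A (S := pPow A 1) (T := pPow A 2)
          (x := Pi.single (⟨1, h1n⟩ : Fin n) 1) (y := wvec n k)
          (by rw [pPow_one_eq]; trivial) (wvec_mem_pPow_two hk4 hkn hA)
        rw [eMul_single_one_wvec hk4 hA rfl, rowA_one hA rfl h3n] at hmem
        have hjeq : (⟨3, h3n⟩ : Fin n) = j := Fin.ext (show (3:ℕ) = (j:ℕ) from h3')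
        have hmem2 := Submodule.neg_mem _ hmem
        rw [neg_neg, hjeq] at hmem2
        exact hmem2
      · -- j ≥ 4
        have hpn : (j:ℕ) - 1 < n := by omega
        have h1n : (j:ℕ) - 1 + 1 < n := by omega
        have hmem := mem_sMul A (S := pPow A 1) (T := pPow A 2)
          (x := Pi.single (⟨(j:ℕ)-1, hpn⟩ : Fin n) 1)
          (y := Pi.single (⟨(j:ℕ)-1, hpn⟩ : Fin n) 1)
          (by rw [pPow_one_eq]; trivial)
          (single_mem_pPow_two hk4 hkn hA (show 3 ≤ (j:ℕ)-1 by omega)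
            (show (j:ℕ)-1 ≤ k-1 by omega))
        rw [eMul_single_self,
          rowA_mid hA (show 2 ≤ (j:ℕ)-1 by omega) (show (j:ℕ)-1 ≤ k-2 by omega) h1n] at hmem
        have hjeq : (⟨(j:ℕ)-1+1, h1n⟩ : Fin n) = j := Fin.ext (show (j:ℕ)-1+1 = (j:ℕ) by omega)
        rwa [hjeq] at hmem
    · -- i ≥ 1
      have hagg : gg (3 * 2 ^ (i-1)) = i - 1 := gg_pow _
      have hpow : (2:ℕ) ^ i = 2 * 2 ^ (i-1) := by
        rw [← pow_succ']
        congr 1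
        omega
      have hpos : 1 ≤ (2:ℕ) ^ (i-1) := Nat.one_le_two_pow
      have halt : 3 * 2 ^ (i-1) < mm + 2 := by
        by_contra hc
        have h5 : gg (mm + 2) ≤ i - 1 := gg_le_iff.mpr (by omega)
        omega
      set a := 3 * 2 ^ (i-1) with ha
      set b := (mm + 2) - a with hb
      have hb1 : 1 ≤ b := by omega
      have hba : b ≤ a := by omega
      have ha3 : 3 ≤ a := by omega
      have hterm : sMul A (pPow A a) (pPow A (mm + 2 - a)) ≤ pPow A (mm+2) :=
        sMul_le_pPow A (by omega) (by omega)
      rw [← hb] at hterm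
      refine le_trans ?_ hterm
      have hpa : pPow A a = Sp n k (3 + (i-1)) := by
        rw [IH a halt ha3, hagg]
      rw [Sp, Submodule.span_le]
      rintro v ⟨j, hji, hjk, rfl⟩
      have hj4 : 4 ≤ (j : ℕ) := by omega
      have hpn : (j:ℕ) - 1 < n := by omega
      have h1n : (j:ℕ) - 1 + 1 < n := by omega
      have hmem1 : Pi.single (⟨(j:ℕ)-1, hpn⟩ : Fin n) (1:ℂ) ∈ pPow A a := by
        rw [hpa]
        exact Submodule.subset_span
          ⟨⟨(j:ℕ)-1, hpn⟩, show 3+(i-1) ≤ (j:ℕ)-1 by omega, show (j:ℕ)-1 ≤ k-1 by omega, rfl⟩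
      have hmem2 : Pi.single (⟨(j:ℕ)-1, hpn⟩ : Fin n) (1:ℂ) ∈ pPow A b := by
        rcases Nat.lt_or_ge b 3 with hblt | hbge
        · interval_cases b
          · rw [pPow_one_eq]; trivial
          · exact single_mem_pPow_two hk4 hkn hA (show 3 ≤ (j:ℕ)-1 by omega)
              (show (j:ℕ)-1 ≤ k-1 by omega)
        · have hggb : gg b ≤ i - 1 := gg_le_iff.mpr (by omega)
          rw [IH b (by omega) hbge]
          exact Submodule.subset_span
            ⟨⟨(j:ℕ)-1, hpn⟩, show 3 + gg b ≤ (j:ℕ)-1 by omega, show (j:ℕ)-1 ≤ k-1 by omega, rfl⟩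
      have hmem := mem_sMul A hmem1 hmem2
      rw [eMul_single_self,
        rowA_mid hA (show 2 ≤ (j:ℕ)-1 by omega) (show (j:ℕ)-1 ≤ k-2 by omega) h1n] at hmem
      have hjeq : (⟨(j:ℕ)-1+1, h1n⟩ : Fin n) = j := Fin.ext (show (j:ℕ)-1+1 = (j:ℕ) by omega)
      rwa [hjeq] at hmem

/-- for `4 ≤ k ≤ n`, the evolution algebra `E_k` with
`e₁·e₁ = e₂+⋯+e_k`, `e₂·e₂ = -e₄`, `eᵢ·eᵢ = e_{i+1}` for `3 ≤ i ≤ k-1` and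
`eᵢ·eᵢ = 0` for `i ≥ k` satisfies `E_k^{3·2ⁱ} = span{e_{4+i},…,e_k}` for
`0 ≤ i ≤ k-4`, and its nilpotency index is exactly `1 + 3·2^{k-4}`. -/
theorem intermediate_nilpotency_index {n k : ℕ} (hk4 : 4 ≤ k) (hkn : k ≤ n)
    (A : Matrix (Fin n) (Fin n) ℂ)
    (hA : ∀ i j : Fin n, A i j =
      if (i : ℕ) = 0 then (if 1 ≤ (j : ℕ) ∧ (j : ℕ) ≤ k - 1 then 1 else 0)
      else if (i : ℕ) = 1 then (if (j : ℕ) = 3 then -1 else 0)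
      else if 2 ≤ (i : ℕ) ∧ (i : ℕ) ≤ k - 2 ∧ (j : ℕ) = (i : ℕ) + 1 then 1 else 0) :
    (∀ i : ℕ, i ≤ k - 4 →
      pPow A (3 * 2 ^ i) =
        Submodule.span ℂ
          {v | ∃ j : Fin n, 3 + i ≤ (j : ℕ) ∧ (j : ℕ) ≤ k - 1 ∧ v = Pi.single j (1 : ℂ)}) ∧
    pPow A (1 + 3 * 2 ^ (k - 4)) = ⊥ ∧
    (∀ m : ℕ, 1 ≤ m → m < 1 + 3 * 2 ^ (k - 4) → pPow A m ≠ ⊥) := by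
  have hA' : hAprop n k A := hA
  have hkm : k - 1 < n := by omega
  refine ⟨?_, ?_, ?_⟩
  · intro i _
    have h3 : 3 ≤ 3 * 2 ^ i := by
      have : 1 ≤ 2 ^ i := Nat.one_le_two_pow
      omega
    rw [pPow_eq_Sp hk4 hkn hA' _ h3, gg_pow]
    rfl
  · have hpow : (2:ℕ) ^ (k-3) = 2 * 2 ^ (k-4) := by
      rw [← pow_succ']
      congr 1
      omega
    have h2p : 1 ≤ (2:ℕ) ^ (k-4) := Nat.one_le_two_pow
    have h3 : 3 ≤ 1 + 3 * 2 ^ (k-4) := by omega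
    have hgg : gg (1 + 3 * 2 ^ (k-4)) = k - 3 := by
      have hle : gg (1 + 3 * 2 ^ (k-4)) ≤ k - 3 := gg_le_iff.mpr (by omega)
      have hgt : ¬ (gg (1 + 3 * 2 ^ (k-4)) ≤ k - 4) := by
        intro h
        have := gg_le_iff.mp h
        omega
      omega
    rw [pPow_eq_Sp hk4 hkn hA' _ h3, hgg, show 3 + (k-3) = k by omega, Sp]
    convert Submodule.span_empty
    rw [Set.eq_empty_iff_forall_notMem]
    rintro v ⟨j, h1, h2, -⟩
    omega
  · intro m hm1 hmlt
    have h2p : 1 ≤ (2:ℕ) ^ (k-4) := Nat.one_le_two_pow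
    have hjval : ((⟨k-1, hkm⟩ : Fin n) : ℕ) = k - 1 := rfl
    have hmem : Pi.single (⟨k-1, hkm⟩ : Fin n) (1:ℂ) ∈ pPow A m := by
      rcases Nat.lt_or_ge m 3 with hm3 | hm3
      · interval_cases m
        · rw [pPow_one_eq]; trivial
        · exact single_mem_pPow_two hk4 hkn hA' (by omega) (by omega)
      · have hggm : gg m ≤ k - 4 := gg_le_iff.mpr (by omega)
        rw [pPow_eq_Sp hk4 hkn hA' _ hm3]
        exact Submodule.subset_span ⟨⟨k-1, hkm⟩, by omega, by omega, rfl⟩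
    intro hbot
    rw [hbot, Submodule.mem_bot] at hmem
    have hc := congrFun hmem ⟨k-1, hkm⟩
    rw [Pi.single_eq_same, Pi.zero_apply] at hc
    exact one_ne_zero hc
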